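/- Let ψ ∈ (ℂ²)^{⊗4} be a unit four-qubit vector such that every single-qubit reduced density operator of |ψ⟩⟨ψ| equals (1/2)·1 and σ_x^{⊗4} ψ = σ_y^{⊗4} ψ = σ_z^{⊗4} ψ = ψ, where σ_x, σ_y, σ_z are the Pauli matrices. Then 𝒞₃(ψ) = 1 = log₂ 2, the maximal value, attained when all four qubits are measured in the eigenbases of σ_x, σ_y and σ_z (which form a complete set of three MUBs of ℂ²); in particular ψ also maximizes 𝒞₂. -/

import Mathlib

open scoped BigOperators ComplexOrder

namespace Paper

noncomputable section

/-- Base-2 Shannon entropy of a finitely indexed probability vector. -/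
def shannon {α : Type*} [Fintype α] (p : α → ℝ) : ℝ :=
  ∑ a, -(p a * Real.logb 2 (p a))

/-- Joint outcome type for `n` subsystems of local dimension `d`. -/
abbrev Idx (n d : ℕ) := Fin n → Fin d

/-- The projector `|ψ⟩⟨ψ|`. -/
def proj {α : Type*} (ψ : α → ℂ) : Matrix α α ℂ :=
  Matrix.of fun x y => ψ x * (starRingEnd ℂ) (ψ y)

/-- A density operator: positive semidefinite with trace one. -/
def IsDensityOp {α : Type*} [Fintype α] [DecidableEq α] (ρ : Matrix α α ℂ) : Prop :=
  ρ.PosSemidef ∧ ρ.trace = 1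

/-- `B` is an orthonormal basis of `ℂ^d` (`B i` is the `i`-th basis vector). -/
def IsONB {d : ℕ} (B : Fin d → Fin d → ℂ) : Prop :=
  ∀ i j, (∑ x, (starRingEnd ℂ) (B i x) * B j x) = if i = j then 1 else 0

/-- Two bases of `ℂ^d` are mutually unbiased. -/
def MutUnbiased {d : ℕ} (B B' : Fin d → Fin d → ℂ) : Prop :=
  ∀ i j, ‖∑ x, (starRingEnd ℂ) (B i x) * B' j x‖ ^ 2 = 1 / d

/-- Joint outcome distribution of measuring the orthonormal basis `B l` on each factor `l`. -/
def jointProb {n d : ℕ} (ρ : Matrix (Idx n d) (Idx n d) ℂ)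
    (B : Fin n → Fin d → Fin d → ℂ) (i : Idx n d) : ℝ :=
  (∑ x : Idx n d, ∑ y : Idx n d,
    (∏ l, (starRingEnd ℂ) (B l (i l) (x l))) * ρ x y * (∏ l, B l (i l) (y l))).re

/-- Marginal distribution of subsystem `l`. -/
def margAt {n d : ℕ} (p : Idx n d → ℝ) (l : Fin n) (i : Fin d) : ℝ :=
  ∑ x : Idx n d, if x l = i then p x else 0

/-- Insert outcome `i` at position `l` into a tuple of outcomes of the other subsystems. -/
def insertAt {n d : ℕ} (l : Fin n) (i : Fin d) (g : {m : Fin n // m ≠ l} → Fin d) : Idx n d :=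
  fun m => if h : m = l then i else g ⟨m, h⟩

/-- Marginal distribution of all subsystems except `l`. -/
def margRest {n d : ℕ} (p : Idx n d → ℝ) (l : Fin n)
    (g : {m : Fin n // m ≠ l} → Fin d) : ℝ :=
  ∑ i : Fin d, p (insertAt l i g)

/-- Mutual information `I(B⁽ˡ⁾ : B⁽ˡ̄⁾)` between the outcome at subsystem `l` and the
outcomes at the remaining subsystems, for the joint outcome distribution `p`. -/
def mutualInfo {n d : ℕ} (p : Idx n d → ℝ) (l : Fin n) : ℝ :=
  shannon (margAt p l) + shannon (margRest p l) - shannon p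

/-- The correlation function `C_N(ρ, {B_k^{(l)}})`. -/
def CNval {n d : ℕ} (N : ℕ) (ρ : Matrix (Idx n d) (Idx n d) ℂ)
    (B : Fin N → Fin n → Fin d → Fin d → ℂ) : ℝ :=
  (1 / (n * N)) * ∑ k, ∑ l, mutualInfo (jointProb ρ (B k)) l

/-- `B k l` is, for each subsystem `l`, a family of `N` pairwise mutually unbiased
orthonormal bases (indexed by `k`). -/
def ValidMUBs {n d : ℕ} (N : ℕ) (B : Fin N → Fin n → Fin d → Fin d → ℂ) : Prop :=
  (∀ k l, IsONB (B k l)) ∧ ∀ l k k', k ≠ k' → MutUnbiased (B k l) (B k' l)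

/-- The set of values `C_N(ρ, ·)` over all admissible choices of MUBs;
`𝒞_N(ρ)` is the supremum of this set. -/
def CNvalues {n d : ℕ} (N : ℕ) (ρ : Matrix (Idx n d) (Idx n d) ℂ) : Set ℝ :=
  {x | ∃ B : Fin N → Fin n → Fin d → Fin d → ℂ, ValidMUBs N B ∧ x = CNval N ρ B}

/-- Single-subsystem reduced state `tr_{l̄} ρ`. -/
def reducedAt {n d : ℕ} (ρ : Matrix (Idx n d) (Idx n d) ℂ) (l : Fin n) :
    Matrix (Fin d) (Fin d) ℂ :=
  Matrix.of fun i j =>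
    ∑ g : {m : Fin n // m ≠ l} → Fin d, ρ (insertAt l i g) (insertAt l j g)

/-- `ω_d = exp(2πi/d)`. -/
def ω (d : ℕ) : ℂ := Complex.exp (2 * Real.pi * Complex.I / d)

/-- The generalized Pauli operator `X_d`. -/
def Xmat (d : ℕ) : Matrix (Fin d) (Fin d) ℂ :=
  Matrix.of fun i j => if (i : ℕ) = ((j : ℕ) + 1) % d then 1 else 0

/-- The generalized Pauli operator `Z_d`. -/
def Zmat (d : ℕ) : Matrix (Fin d) (Fin d) ℂ :=
  Matrix.of fun i j => if i = j then ω d ^ (i : ℕ) else 0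

/-- The generalized Pauli operator `S_{d,(k₁,k₂)} = X_d^{k₁} Z_d^{k₂}`. -/
def Smat (d : ℕ) (k : Fin d × Fin d) : Matrix (Fin d) (Fin d) ℂ :=
  Xmat d ^ (k.1 : ℕ) * Zmat d ^ (k.2 : ℕ)

/-- Apply a local operator `A l` to each tensor factor of a multipartite vector `ψ`,
i.e. the vector `(⊗_l A l) ψ`. -/
def applyLocal {n d : ℕ} (A : Fin n → Matrix (Fin d) (Fin d) ℂ) (ψ : Idx n d → ℂ) :
    Idx n d → ℂ :=
  fun x => ∑ y : Idx n d, (∏ l, A l (x l) (y l)) * ψ y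

/-- The computational (standard) basis of `ℂ^d`, the eigenbasis of `Z_d`. -/
def stdBasis (d : ℕ) : Fin d → Fin d → ℂ :=
  fun i x => if x = i then 1 else 0

/-- The Fourier basis of `ℂ^d`, the eigenbasis of `X_d`. -/
def fourierBasis (d : ℕ) : Fin d → Fin d → ℂ :=
  fun i x => (((Real.sqrt d)⁻¹ : ℝ) : ℂ) * ω d ^ ((i : ℕ) * (x : ℕ))

/-- The `n`-fold tensor product `⊗_l A l` as a matrix on the joint system. -/
def tensorN {n d : ℕ} (A : Fin n → Matrix (Fin d) (Fin d) ℂ) :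
    Matrix (Idx n d) (Idx n d) ℂ :=
  Matrix.of fun x y => ∏ l, A l (x l) (y l)

/-- Full separability of an `n`-partite density operator. -/
def FullySep {n d : ℕ} (ρ : Matrix (Idx n d) (Idx n d) ℂ) : Prop :=
  ∃ (J : ℕ) (p : Fin J → ℝ) (σ : Fin J → Fin n → Matrix (Fin d) (Fin d) ℂ),
    (∀ j, 0 ≤ p j) ∧ (∑ j, p j) = 1 ∧ (∀ j l, IsDensityOp (σ j l)) ∧
    ρ = ∑ j, p j • tensorN (σ j)

/-- generalized GHZ state `(1/√d) ∑_i |i⟩^{⊗n}`. -/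
def GHZvec (d n : ℕ) : Idx n d → ℂ :=
  fun x => if ∀ l l', x l = x l' then (((Real.sqrt d)⁻¹ : ℝ) : ℂ) else 0


def sigmaX : Matrix (Fin 2) (Fin 2) ℂ := !![0, 1; 1, 0]
def sigmaY : Matrix (Fin 2) (Fin 2) ℂ := !![0, -Complex.I; Complex.I, 0]
def sigmaZ : Matrix (Fin 2) (Fin 2) ℂ := !![1, 0; 0, -1]

section Aux
open Finset

variable {n d : ℕ}

/-- Amplitude of outcome `i` for the pure state `ψ` measured in product basis `B`. -/
def amp (B : Fin n → Fin d → Fin d → ℂ) (ψ : Idx n d → ℂ) (i : Idx n d) : ℂ :=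
  ∑ x : Idx n d, (∏ l, (starRingEnd ℂ) (B l (i l) (x l))) * ψ x

lemma jointProb_eq_normSq (B : Fin n → Fin d → Fin d → ℂ) (ψ : Idx n d → ℂ) (i : Idx n d) :
    jointProb (proj ψ) B i = Complex.normSq (amp B ψ i) := by
  have h : (∑ x : Idx n d, ∑ y : Idx n d,
      (∏ l, (starRingEnd ℂ) (B l (i l) (x l))) * proj ψ x y * (∏ l, B l (i l) (y l)))
      = amp B ψ i * (starRingEnd ℂ) (amp B ψ i) := by
    rw [amp, map_sum, Finset.sum_mul_sum]
    refine Finset.sum_congr rfl fun x _ => Finset.sum_congr rfl fun y _ => ?_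
    simp only [proj, Matrix.of_apply, map_mul, map_prod, Complex.conj_conj]
    ring
  rw [jointProb, h, Complex.mul_conj]
  simp

lemma jointProb_nonneg (B : Fin n → Fin d → Fin d → ℂ) (ψ : Idx n d → ℂ) (i : Idx n d) :
    0 ≤ jointProb (proj ψ) B i := by
  rw [jointProb_eq_normSq]; exact Complex.normSq_nonneg _

lemma onb_cols {B₀ : Fin d → Fin d → ℂ} (hB : IsONB B₀) (x y : Fin d) :
    (∑ i, (starRingEnd ℂ) (B₀ i x) * B₀ i y) = if x = y then 1 else 0 := by
  classical
  set U : Matrix (Fin d) (Fin d) ℂ := Matrix.of fun i x => B₀ i x with hU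
  have h1 : U * U.conjTranspose = 1 := by
    ext i j
    simp only [Matrix.mul_apply, Matrix.conjTranspose_apply, Matrix.one_apply, hU,
      Matrix.of_apply, Matrix.star_apply]
    have := hB j i
    calc ∑ x, B₀ i x * star (B₀ j x)
        = (starRingEnd ℂ) (∑ x, (starRingEnd ℂ) (B₀ i x) * B₀ j x) := by
          rw [map_sum]; exact Finset.sum_congr rfl fun x _ => by
            simp [mul_comm]
      _ = if i = j then 1 else 0 := by rw [hB i j]; split_ifs <;> simp
  have h2 : U.conjTranspose * U = 1 := mul_eq_one_comm.mp h1
  have := congrArg (fun M => M x y) h2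
  simp only [Matrix.mul_apply, Matrix.conjTranspose_apply, Matrix.one_apply, hU,
    Matrix.of_apply, Matrix.star_apply] at this
  simpa [mul_comm] using this

end Aux
section Aux2
open Finset
variable {n d : ℕ}

lemma sum_prod_pi (f : Fin n → Fin d → ℂ) :
    ∑ i : Idx n d, ∏ l, f l (i l) = ∏ l, ∑ j, f l j := by
  rw [Finset.prod_univ_sum (fun _ : Fin n => (Finset.univ : Finset (Fin d))) f,
    Fintype.piFinset_univ]

lemma prod_ite_eq_ite {x y : Idx n d} :
    (∏ l, if x l = y l then (1:ℂ) else 0) = if x = y then 1 else 0 := by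
  by_cases h : x = y
  · subst h; simp
  · rw [if_neg h]
    obtain ⟨l, hl⟩ : ∃ l, x l ≠ y l := by
      by_contra hc; push_neg at hc; exact h (funext hc)
    exact Finset.prod_eq_zero (Finset.mem_univ l) (by rw [if_neg hl])

lemma sum_prod_basis {B : Fin n → Fin d → Fin d → ℂ} (hB : ∀ l, IsONB (B l))
    (x y : Idx n d) :
    (∑ i : Idx n d, (∏ l, (starRingEnd ℂ) (B l (i l) (x l))) * ∏ l, B l (i l) (y l))
      = if x = y then 1 else 0 := by
  have h2 : (∑ i : Idx n d, (∏ l, (starRingEnd ℂ) (B l (i l) (x l))) * ∏ l, B l (i l) (y l))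
      = ∑ i : Idx n d, ∏ l, ((starRingEnd ℂ) (B l (i l) (x l)) * B l (i l) (y l)) :=
    Finset.sum_congr rfl fun i _ => (Finset.prod_mul_distrib).symm
  rw [h2, sum_prod_pi (fun l j => (starRingEnd ℂ) (B l j (x l)) * B l j (y l))]
  calc (∏ l, ∑ j, (starRingEnd ℂ) (B l j (x l)) * B l j (y l))
      = ∏ l, if x l = y l then (1:ℂ) else 0 :=
        Finset.prod_congr rfl fun l _ => onb_cols (hB l) _ _
    _ = _ := prod_ite_eq_ite

lemma sum_jointProb {B : Fin n → Fin d → Fin d → ℂ} (hB : ∀ l, IsONB (B l))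
    {ψ : Idx n d → ℂ} (hψ : ∑ x, Complex.normSq (ψ x) = 1) :
    ∑ i : Idx n d, jointProb (proj ψ) B i = 1 := by
  simp only [jointProb_eq_normSq]
  have h : ∑ i : Idx n d, (amp B ψ i * (starRingEnd ℂ) (amp B ψ i))
      = ∑ x : Idx n d, (ψ x * (starRingEnd ℂ) (ψ x)) := by
    have expand : ∀ i : Idx n d, amp B ψ i * (starRingEnd ℂ) (amp B ψ i)
        = ∑ x : Idx n d, ∑ y : Idx n d,
            ((∏ l, (starRingEnd ℂ) (B l (i l) (x l))) * ∏ l, B l (i l) (y l))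
              * (ψ x * (starRingEnd ℂ) (ψ y)) := by
      intro i
      rw [amp, map_sum, Finset.sum_mul_sum]
      refine Finset.sum_congr rfl fun x _ => Finset.sum_congr rfl fun y _ => ?_
      simp only [map_mul, map_prod, Complex.conj_conj]
      ring
    calc ∑ i : Idx n d, amp B ψ i * (starRingEnd ℂ) (amp B ψ i)
        = ∑ i : Idx n d, ∑ x : Idx n d, ∑ y : Idx n d,
            ((∏ l, (starRingEnd ℂ) (B l (i l) (x l))) * ∏ l, B l (i l) (y l))
              * (ψ x * (starRingEnd ℂ) (ψ y)) := Finset.sum_congr rfl fun i _ => expand i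
      _ = ∑ x : Idx n d, ∑ y : Idx n d, ∑ i : Idx n d,
            ((∏ l, (starRingEnd ℂ) (B l (i l) (x l))) * ∏ l, B l (i l) (y l))
              * (ψ x * (starRingEnd ℂ) (ψ y)) := by
          rw [Finset.sum_comm]
          exact Finset.sum_congr rfl fun x _ => Finset.sum_comm
      _ = ∑ x : Idx n d, ∑ y : Idx n d,
            (if x = y then (1:ℂ) else 0) * (ψ x * (starRingEnd ℂ) (ψ y)) := by
          refine Finset.sum_congr rfl fun x _ => Finset.sum_congr rfl fun y _ => ?_
          rw [← Finset.sum_mul, sum_prod_basis hB]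
      _ = ∑ x : Idx n d, (ψ x * (starRingEnd ℂ) (ψ x)) := by
          refine Finset.sum_congr rfl fun x _ => ?_
          simp [ite_mul]
  have h2 : (∑ i : Idx n d, (Complex.normSq (amp B ψ i) : ℂ))
      = ∑ x : Idx n d, (Complex.normSq (ψ x) : ℂ) := by
    simpa only [Complex.mul_conj] using h
  have h3 := congrArg Complex.re h2
  simpa [hψ] using h3
end Aux2
section Aux3
open Finset
variable {n d : ℕ}

lemma insertAt_same (l : Fin n) (i : Fin d) (g : {m : Fin n // m ≠ l} → Fin d) :
    insertAt l i g l = i := dif_pos rfl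

lemma insertAt_ne (l : Fin n) (i : Fin d) (g : {m : Fin n // m ≠ l} → Fin d)
    {m : Fin n} (h : m ≠ l) : insertAt l i g m = g ⟨m, h⟩ := dif_neg h

lemma insertAt_bijective (l : Fin n) :
    Function.Bijective (fun p : Fin d × ({m : Fin n // m ≠ l} → Fin d) =>
      insertAt l p.1 p.2) := by
  rw [Function.bijective_iff_has_inverse]
  refine ⟨fun x => (x l, fun m => x m.1), fun p => ?_, fun x => ?_⟩
  · obtain ⟨j, g⟩ := p
    refine Prod.ext ?_ ?_
    · simp [insertAt_same]
    · funext m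
      simp only
      rw [insertAt_ne l j g m.2]
  · funext m
    by_cases h : m = l
    · subst h; exact insertAt_same _ _ _
    · exact insertAt_ne _ _ _ h

lemma sum_insertAt {M : Type*} [AddCommMonoid M] (l : Fin n) (f : Idx n d → M) :
    ∑ x : Idx n d, f x
      = ∑ j : Fin d, ∑ g : {m : Fin n // m ≠ l} → Fin d, f (insertAt l j g) := by
  have h := Fintype.sum_bijective _ (insertAt_bijective l) _ f (fun p => rfl)
  rw [← h, Fintype.sum_prod_type]

lemma margAt_eq (p : Idx n d → ℝ) (l : Fin n) (i : Fin d) :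
    margAt p l i = ∑ g : {m : Fin n // m ≠ l} → Fin d, p (insertAt l i g) := by
  rw [margAt, sum_insertAt l]
  have : ∀ j : Fin d, (∑ g : {m : Fin n // m ≠ l} → Fin d,
      if insertAt l j g l = i then p (insertAt l j g) else 0)
      = if j = i then ∑ g : {m : Fin n // m ≠ l} → Fin d, p (insertAt l j g) else 0 := by
    intro j
    simp only [insertAt_same]
    split_ifs <;> simp
  rw [Finset.sum_congr rfl fun j _ => this j]
  simp
end Aux3
section Aux4
open Finset
variable {n d : ℕ}

lemma amp_mul_conj (B : Fin n → Fin d → Fin d → ℂ) (ψ : Idx n d → ℂ) (x : Idx n d) :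
    amp B ψ x * (starRingEnd ℂ) (amp B ψ x)
      = ∑ z : Idx n d, ∑ w : Idx n d,
          ((∏ m, (starRingEnd ℂ) (B m (x m) (z m))) * ∏ m, B m (x m) (w m))
            * (ψ z * (starRingEnd ℂ) (ψ w)) := by
  rw [amp, map_sum, Finset.sum_mul_sum]
  refine Finset.sum_congr rfl fun z _ => Finset.sum_congr rfl fun w _ => ?_
  simp only [map_mul, map_prod, Complex.conj_conj]
  ring

lemma sum_prod_fn {ι : Type*} [Fintype ι] [DecidableEq ι] (f : ι → Fin d → ℂ) :
    ∑ g : ι → Fin d, ∏ m, f m (g m) = ∏ m, ∑ j, f m j := by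
  rw [Finset.prod_univ_sum (fun _ : ι => (Finset.univ : Finset (Fin d))) f,
    Fintype.piFinset_univ]

lemma prod_ite_eq_ite' {ι : Type*} [Fintype ι] {x y : ι → Fin d} :
    (∏ m, if x m = y m then (1:ℂ) else 0) = if x = y then 1 else 0 := by
  by_cases h : x = y
  · subst h; simp
  · rw [if_neg h]
    obtain ⟨m, hm⟩ : ∃ m, x m ≠ y m := by
      by_contra hc; push_neg at hc; exact h (funext hc)
    exact Finset.prod_eq_zero (Finset.mem_univ m) (by rw [if_neg hm])

lemma prod_split (l : Fin n) (F : Fin n → ℂ) :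
    ∏ m, F m = F l * ∏ m : {m : Fin n // m ≠ l}, F m.1 := by
  rw [Fintype.prod_eq_mul_prod_compl l]
  congr 1
  exact Finset.prod_subtype _ (by simp) _

lemma reducedAt_proj (ψ : Idx n d → ℂ) (l : Fin n) (a b : Fin d) :
    reducedAt (proj ψ) l a b
      = ∑ g : {m : Fin n // m ≠ l} → Fin d,
          ψ (insertAt l a g) * (starRingEnd ℂ) (ψ (insertAt l b g)) := rfl

lemma margAt_jointProb {B : Fin n → Fin d → Fin d → ℂ} (hB : ∀ m, IsONB (B m))
    (ψ : Idx n d → ℂ) (l : Fin n) (i : Fin d) :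
    margAt (jointProb (proj ψ) B) l i
      = (∑ a, ∑ b, (starRingEnd ℂ) (B l i a) * reducedAt (proj ψ) l a b * B l i b).re := by
  classical
  set S := {m : Fin n // m ≠ l}
  -- the "delta-reduced" integrand
  set T : Idx n d → Idx n d → ℂ := fun z w =>
    (((starRingEnd ℂ) (B l i (z l)) * B l i (w l))
      * ∏ m : S, (if z m.1 = w m.1 then (1:ℂ) else 0))
      * (ψ z * (starRingEnd ℂ) (ψ w)) with hT
  have inner : ∀ z w : Idx n d,
      (∑ g : S → Fin d,
        (∏ m, (starRingEnd ℂ) (B m (insertAt l i g m) (z m)))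
          * ∏ m, B m (insertAt l i g m) (w m))
      = ((starRingEnd ℂ) (B l i (z l)) * B l i (w l))
          * ∏ m : S, (if z m.1 = w m.1 then (1:ℂ) else 0) := by
    intro z w
    have step1 : ∀ g : S → Fin d,
        (∏ m, (starRingEnd ℂ) (B m (insertAt l i g m) (z m)))
          * ∏ m, B m (insertAt l i g m) (w m)
        = ((starRingEnd ℂ) (B l i (z l)) * B l i (w l))
            * ∏ m : S, ((starRingEnd ℂ) (B m.1 (g m) (z m.1)) * B m.1 (g m) (w m.1)) := by
      intro g
      rw [prod_split l (fun m => (starRingEnd ℂ) (B m (insertAt l i g m) (z m))),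
        prod_split l (fun m => B m (insertAt l i g m) (w m))]
      simp only [insertAt_same]
      rw [Finset.prod_mul_distrib]
      have h2 : (∏ m : S, (starRingEnd ℂ) (B m.1 (insertAt l i g m.1) (z m.1)))
          = ∏ m : S, (starRingEnd ℂ) (B m.1 (g m) (z m.1)) :=
        Finset.prod_congr rfl fun m _ => by rw [insertAt_ne l i g m.2, Subtype.eta]
      have h3 : (∏ m : S, B m.1 (insertAt l i g m.1) (w m.1))
          = ∏ m : S, B m.1 (g m) (w m.1) :=
        Finset.prod_congr rfl fun m _ => by rw [insertAt_ne l i g m.2, Subtype.eta]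
      rw [h2, h3]
      ring
    rw [Finset.sum_congr rfl fun g _ => step1 g, ← Finset.mul_sum,
      sum_prod_fn (fun (m : S) j => (starRingEnd ℂ) (B m.1 j (z m.1)) * B m.1 j (w m.1))]
    congr 1
    exact Finset.prod_congr rfl fun m _ => onb_cols (hB m.1) _ _
  have key : (∑ g : S → Fin d,
      amp B ψ (insertAt l i g) * (starRingEnd ℂ) (amp B ψ (insertAt l i g)))
      = ∑ a, ∑ b, (starRingEnd ℂ) (B l i a) * reducedAt (proj ψ) l a b * B l i b := by
    calc (∑ g : S → Fin d,
          amp B ψ (insertAt l i g) * (starRingEnd ℂ) (amp B ψ (insertAt l i g)))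
        = ∑ g : S → Fin d, ∑ z : Idx n d, ∑ w : Idx n d,
            ((∏ m, (starRingEnd ℂ) (B m (insertAt l i g m) (z m)))
              * ∏ m, B m (insertAt l i g m) (w m)) * (ψ z * (starRingEnd ℂ) (ψ w)) :=
          Finset.sum_congr rfl fun g _ => amp_mul_conj B ψ _
      _ = ∑ z : Idx n d, ∑ w : Idx n d, T z w := by
          rw [Finset.sum_comm]
          refine Finset.sum_congr rfl fun z _ => ?_
          rw [Finset.sum_comm]
          refine Finset.sum_congr rfl fun w _ => ?_
          rw [← Finset.sum_mul, inner z w]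
      _ = ∑ a, ∑ h : S → Fin d, ∑ b, ∑ h' : S → Fin d,
            T (insertAt l a h) (insertAt l b h') := by
          rw [sum_insertAt l (fun z => ∑ w, T z w)]
          exact Finset.sum_congr rfl fun a _ => Finset.sum_congr rfl fun h _ =>
            sum_insertAt l (fun w => T (insertAt l a h) w)
      _ = ∑ a, ∑ h : S → Fin d, ∑ b, ∑ h' : S → Fin d,
            (if h = h' then ((starRingEnd ℂ) (B l i a) * B l i b)
              * (ψ (insertAt l a h) * (starRingEnd ℂ) (ψ (insertAt l b h'))) else 0) := by
          refine Finset.sum_congr rfl fun a _ => Finset.sum_congr rfl fun h _ =>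
            Finset.sum_congr rfl fun b _ => Finset.sum_congr rfl fun h' _ => ?_
          rw [hT]
          simp only [insertAt_same]
          have e1 : ∀ m : S, insertAt l a h m.1 = h m := fun m => by
            rw [insertAt_ne l a h m.2, Subtype.eta]
          have e2 : ∀ m : S, insertAt l b h' m.1 = h' m := fun m => by
            rw [insertAt_ne l b h' m.2, Subtype.eta]
          have : (∏ m : S, if insertAt l a h m.1 = insertAt l b h' m.1 then (1:ℂ) else 0)
              = if h = h' then 1 else 0 := by
            rw [Finset.prod_congr rfl fun m _ => by rw [e1 m, e2 m]]
            exact prod_ite_eq_ite'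
          rw [this]
          split_ifs <;> ring
      _ = ∑ a, ∑ h : S → Fin d, ∑ b,
            ((starRingEnd ℂ) (B l i a) * B l i b)
              * (ψ (insertAt l a h) * (starRingEnd ℂ) (ψ (insertAt l b h))) := by
          refine Finset.sum_congr rfl fun a _ => Finset.sum_congr rfl fun h _ =>
            Finset.sum_congr rfl fun b _ => ?_
          rw [Finset.sum_ite_eq]
          simp
      _ = ∑ a, ∑ b, (starRingEnd ℂ) (B l i a) * reducedAt (proj ψ) l a b * B l i b := by
          refine Finset.sum_congr rfl fun a _ => ?_
          rw [Finset.sum_comm]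
          refine Finset.sum_congr rfl fun b _ => ?_
          have h4 : ∀ h : S → Fin d,
              ((starRingEnd ℂ) (B l i a) * B l i b)
                * (ψ (insertAt l a h) * (starRingEnd ℂ) (ψ (insertAt l b h)))
              = (starRingEnd ℂ) (B l i a)
                  * (ψ (insertAt l a h) * (starRingEnd ℂ) (ψ (insertAt l b h))) * B l i b :=
            fun h => by ring
          rw [Finset.sum_congr rfl fun h _ => h4 h, ← Finset.sum_mul, ← Finset.mul_sum,
            reducedAt_proj]
  calc margAt (jointProb (proj ψ) B) l i
      = ∑ g : S → Fin d, Complex.normSq (amp B ψ (insertAt l i g)) := by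
        rw [margAt_eq]
        exact Finset.sum_congr rfl fun g _ => jointProb_eq_normSq B ψ _
    _ = (∑ g : S → Fin d,
          amp B ψ (insertAt l i g) * (starRingEnd ℂ) (amp B ψ (insertAt l i g))).re := by
        rw [Complex.re_sum]
        exact Finset.sum_congr rfl fun g _ => by rw [Complex.mul_conj, Complex.ofReal_re]
    _ = _ := by rw [key]

end Aux4
section Aux5
open Finset
variable {n d : ℕ}

lemma neg_mul_logb_le {q : ℝ} (hq : 0 ≤ q) :
    -(q * Real.logb 2 q) ≤ q + (1/2 - q) / Real.log 2 := by
  have hlog2 : 0 < Real.log 2 := Real.log_pos one_lt_two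
  rcases eq_or_lt_of_le hq with h|h
  · rw [← h]; simp; positivity
  · have key : Real.log (1/(2*q)) ≤ 1/(2*q) - 1 :=
      Real.log_le_sub_one_of_pos (by positivity)
    have hl : Real.log (1/(2*q)) = -(Real.log 2 + Real.log q) := by
      rw [one_div, Real.log_inv, Real.log_mul (by norm_num) (ne_of_gt h)]
    rw [hl] at key
    have hq2 : q * (1/(2*q)) = 1/2 := by field_simp
    have main : -(q * Real.log q) ≤ q * Real.log 2 + (1/2 - q) := by nlinarith [key, hq2]
    calc -(q * Real.logb 2 q) = (-(q * Real.log q))/Real.log 2 := by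
          rw [Real.logb]; ring
      _ ≤ (q * Real.log 2 + (1/2 - q))/Real.log 2 := by gcongr
      _ = q + (1/2 - q)/Real.log 2 := by field_simp

lemma shannon_two_le_one (q : Fin 2 → ℝ) (hq : ∀ i, 0 ≤ q i) (hs : ∑ i, q i = 1) :
    shannon q ≤ 1 := by
  have hlog2 : 0 < Real.log 2 := Real.log_pos one_lt_two
  have h01 : q 0 + q 1 = 1 := by simpa [Fin.sum_univ_two] using hs
  calc shannon q ≤ ∑ i, (q i + (1/2 - q i)/Real.log 2) :=
        Finset.sum_le_sum fun i _ => neg_mul_logb_le (hq i)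
    _ = 1 := by
        rw [Fin.sum_univ_two]
        field_simp
        linear_combination (2*Real.log 2 - 2) * h01

lemma margAt_nonneg (p : Idx n d → ℝ) (hp : ∀ x, 0 ≤ p x) (l : Fin n) (i : Fin d) :
    0 ≤ margAt p l i := by
  rw [margAt_eq]
  exact Finset.sum_nonneg fun g _ => hp _

lemma sum_margAt (p : Idx n d → ℝ) (l : Fin n) : ∑ i, margAt p l i = ∑ x, p x := by
  rw [Finset.sum_congr rfl fun i _ => margAt_eq p l i, sum_insertAt l p]

lemma shannon_margRest_le (p : Idx n d → ℝ) (hp : ∀ x, 0 ≤ p x) (l : Fin n) :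
    shannon (margRest p l) ≤ shannon p := by
  rw [shannon, shannon, sum_insertAt l (fun x => -(p x * Real.logb 2 (p x))),
    Finset.sum_comm]
  apply Finset.sum_le_sum
  intro g _
  have hq : margRest p l g = ∑ j, p (insertAt l j g) := rfl
  have step : ∀ j : Fin d, -(p (insertAt l j g) * Real.logb 2 (margRest p l g))
      ≤ -(p (insertAt l j g) * Real.logb 2 (p (insertAt l j g))) := by
    intro j
    rcases eq_or_lt_of_le (hp (insertAt l j g)) with h|h
    · rw [← h]; simp
    · have hle : p (insertAt l j g) ≤ margRest p l g := by
        rw [hq]; exact Finset.single_le_sum (f := fun j => p (insertAt l j g)) (fun j _ => hp _) (Finset.mem_univ j)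
      have hlb := Real.logb_le_logb_of_le one_lt_two h hle
      nlinarith [hlb, h]
  calc -(margRest p l g * Real.logb 2 (margRest p l g))
      = ∑ j, -(p (insertAt l j g) * Real.logb 2 (margRest p l g)) := by
        rw [Finset.sum_neg_distrib, ← Finset.sum_mul, ← hq]
    _ ≤ _ := Finset.sum_le_sum fun j _ => step j

lemma shannon_collapse (p : Idx n d → ℝ) (l : Fin n)
    (f : ({m : Fin n // m ≠ l} → Fin d) → Fin d)
    (h0 : ∀ g (i : Fin d), i ≠ f g → p (insertAt l i g) = 0) :
    shannon (margRest p l) = shannon p := by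
  rw [shannon, shannon, sum_insertAt l (fun x => -(p x * Real.logb 2 (p x))),
    Finset.sum_comm]
  apply Finset.sum_congr rfl
  intro g _
  have hm : margRest p l g = p (insertAt l (f g) g) := by
    rw [margRest]
    exact Finset.sum_eq_single (f g) (fun i _ hne => h0 g i hne) (by simp)
  rw [hm]
  symm
  apply Finset.sum_eq_single (f g)
  · intro i _ hne; rw [h0 g i hne]; simp
  · simp

lemma mutualInfo_le_one (p : Idx n 2 → ℝ) (hp : ∀ x, 0 ≤ p x) (hs : ∑ x, p x = 1)
    (l : Fin n) : mutualInfo p l ≤ 1 := by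
  rw [mutualInfo]
  have h1 : shannon (margAt p l) ≤ 1 :=
    shannon_two_le_one _ (margAt_nonneg p hp l) (by rw [sum_margAt]; exact hs)
  have h2 : shannon (margRest p l) ≤ shannon p := shannon_margRest_le p hp l
  linarith

lemma mutualInfo_eq_one (p : Idx n 2 → ℝ) (l : Fin n)
    (hmarg : ∀ i, margAt p l i = 1/2)
    (f : ({m : Fin n // m ≠ l} → Fin 2) → Fin 2)
    (h0 : ∀ g (i : Fin 2), i ≠ f g → p (insertAt l i g) = 0) :
    mutualInfo p l = 1 := by
  rw [mutualInfo, shannon_collapse p l f h0]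
  have hma : shannon (margAt p l) = 1 := by
    have hlb : Real.logb 2 (1/2 : ℝ) = -1 := by
      rw [one_div, Real.logb_inv, Real.logb_self_eq_one one_lt_two]
    rw [shannon, Fin.sum_univ_two, hmarg 0, hmarg 1, hlb]
    norm_num
  rw [hma]
  ring
end Aux5
section Conc
open Finset

def s2c : ℂ := (((Real.sqrt 2)⁻¹ : ℝ) : ℂ)

lemma s2c_mul_s2c : s2c * s2c = 1/2 := by
  rw [s2c, ← Complex.ofReal_mul]
  have h : (Real.sqrt 2)⁻¹ * (Real.sqrt 2)⁻¹ = 1/2 := by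
    rw [← mul_inv, Real.mul_self_sqrt (by norm_num : (0:ℝ) ≤ 2)]
    norm_num
  rw [h]
  norm_num

lemma s2c_re : s2c.re = (Real.sqrt 2)⁻¹ := rfl
lemma s2c_im : s2c.im = 0 := rfl

lemma r2_mul_r2 : (Real.sqrt 2)⁻¹ * (Real.sqrt 2)⁻¹ = 1/2 := by
  rw [← mul_inv, Real.mul_self_sqrt (by norm_num : (0:ℝ) ≤ 2)]
  norm_num

lemma conj_s2c : (starRingEnd ℂ) s2c = s2c := Complex.conj_ofReal _

def Bx : Fin 2 → Fin 2 → ℂ := fun i x => s2c * (-1)^((i:ℕ)*(x:ℕ))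
def By : Fin 2 → Fin 2 → ℂ := fun i x => s2c * (Complex.I)^(x:ℕ) * (-1)^((i:ℕ)*(x:ℕ))
def Bz : Fin 2 → Fin 2 → ℂ := stdBasis 2

lemma isONB_Bx : IsONB Bx := by
  intro i j
  fin_cases i <;> fin_cases j <;>
    simp [Bx, Fin.sum_univ_two, map_mul, conj_s2c] <;>
    linear_combination 2 * s2c_mul_s2c

lemma isONB_By : IsONB By := by
  intro i j
  fin_cases i <;> fin_cases j <;>
    simp [By, Fin.sum_univ_two, map_mul, conj_s2c, Complex.conj_I] <;>
    first
      | linear_combination 2 * s2c_mul_s2c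
      | linear_combination (-(s2c*s2c)) * Complex.I_sq
      | linear_combination s2c^2 * Complex.I_sq - 2 * s2c_mul_s2c
      | linear_combination (-(s2c^2)) * Complex.I_sq + 2 * s2c_mul_s2c
      | linear_combination s2c^2 * Complex.I_sq
      | ring

lemma isONB_Bz : IsONB Bz := by
  intro i j
  fin_cases i <;> fin_cases j <;>
    simp [Bz, stdBasis, Fin.sum_univ_two]

lemma eigenrow_x : ∀ i y : Fin 2,
    (∑ x, (starRingEnd ℂ) (Bx i x) * sigmaX x y) = (-1)^(i:ℕ) * (starRingEnd ℂ) (Bx i y) := by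
  intro i y
  fin_cases i <;> fin_cases y <;>
    simp [Bx, sigmaX, Fin.sum_univ_two, map_mul, conj_s2c] <;>
    ring

lemma eigenrow_y : ∀ i y : Fin 2,
    (∑ x, (starRingEnd ℂ) (By i x) * sigmaY x y) = (-1)^(i:ℕ) * (starRingEnd ℂ) (By i y) := by
  intro i y
  fin_cases i <;> fin_cases y <;>
    simp [By, sigmaY, Fin.sum_univ_two, map_mul, conj_s2c, Complex.conj_I] <;>
    first
      | linear_combination (-s2c) * Complex.I_sq
      | linear_combination s2c * Complex.I_sq
      | ring

lemma eigenrow_z : ∀ i y : Fin 2,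
    (∑ x, (starRingEnd ℂ) (Bz i x) * sigmaZ x y) = (-1)^(i:ℕ) * (starRingEnd ℂ) (Bz i y) := by
  intro i y
  fin_cases i <;> fin_cases y <;>
    simp [Bz, stdBasis, sigmaZ, Fin.sum_univ_two]

lemma mub_xy : MutUnbiased Bx By := by
  intro i j
  rw [Complex.sq_norm]
  fin_cases i <;> fin_cases j <;>
    simp [Bx, By, Fin.sum_univ_two, map_mul, conj_s2c, Complex.normSq_apply, s2c_re, s2c_im] <;>
    nlinarith [r2_mul_r2]

lemma mub_xz : MutUnbiased Bx Bz := by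
  intro i j
  rw [Complex.sq_norm]
  fin_cases i <;> fin_cases j <;>
    simp [Bx, Bz, stdBasis, Fin.sum_univ_two, map_mul, conj_s2c, Complex.normSq_apply, s2c_re, s2c_im] <;>
    nlinarith [r2_mul_r2]

lemma mub_yz : MutUnbiased By Bz := by
  intro i j
  rw [Complex.sq_norm]
  fin_cases i <;> fin_cases j <;>
    simp [By, Bz, stdBasis, Fin.sum_univ_two, map_mul, conj_s2c, Complex.conj_I,
      Complex.normSq_apply, s2c_re, s2c_im] <;>
    nlinarith [r2_mul_r2]

lemma mulVec_x : ∀ i, Matrix.mulVec sigmaX (Bx i) = ((-1)^(i:ℕ) : ℂ) • Bx i := by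
  intro i
  funext x
  fin_cases i <;> fin_cases x <;>
    simp [Bx, sigmaX, Matrix.mulVec, dotProduct, Fin.sum_univ_two, Matrix.vecHead, Matrix.vecTail] <;> ring

lemma mulVec_y : ∀ i, Matrix.mulVec sigmaY (By i) = ((-1)^(i:ℕ) : ℂ) • By i := by
  intro i
  funext x
  fin_cases i <;> fin_cases x <;>
    simp [By, sigmaY, Matrix.mulVec, dotProduct, Fin.sum_univ_two, Matrix.vecHead,
      Matrix.vecTail] <;>
    first
      | linear_combination (-s2c) * Complex.I_sq
      | linear_combination s2c * Complex.I_sq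
      | ring

lemma mulVec_z : ∀ i, Matrix.mulVec sigmaZ (Bz i) = ((-1)^(i:ℕ) : ℂ) • Bz i := by
  intro i
  funext x
  fin_cases i <;> fin_cases x <;>
    simp [Bz, stdBasis, sigmaZ, Matrix.mulVec, dotProduct, Fin.sum_univ_two, Matrix.vecHead, Matrix.vecTail]
end Conc
section Parity
open Finset
variable {n : ℕ}

lemma sum_split_nat (l : Fin n) (F : Fin n → ℕ) :
    ∑ m, F m = F l + ∑ m : {m : Fin n // m ≠ l}, F m.1 := by
  rw [Fintype.sum_eq_add_sum_compl l]
  congr 1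
  exact Finset.sum_subtype _ (by simp) _

lemma amp_eigen (σ : Matrix (Fin 2) (Fin 2) ℂ) (b : Fin 2 → Fin 2 → ℂ)
    (hb : ∀ i y : Fin 2, (∑ x, (starRingEnd ℂ) (b i x) * σ x y)
      = (-1)^(i:ℕ) * (starRingEnd ℂ) (b i y))
    {ψ : Idx n 2 → ℂ} (hψ : applyLocal (fun _ : Fin n => σ) ψ = ψ) (i : Idx n 2) :
    amp (fun _ => b) ψ i = (-1)^(∑ l, (i l : ℕ)) * amp (fun _ => b) ψ i := by
  have inner : ∀ y : Idx n 2,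
      (∑ x : Idx n 2, (∏ l, (starRingEnd ℂ) (b (i l) (x l))) * ∏ l, σ (x l) (y l))
      = (-1)^(∑ l, (i l : ℕ)) * ∏ l, (starRingEnd ℂ) (b (i l) (y l)) := by
    intro y
    have h1 : ∀ x : Idx n 2, (∏ l, (starRingEnd ℂ) (b (i l) (x l))) * ∏ l, σ (x l) (y l)
        = ∏ l, ((starRingEnd ℂ) (b (i l) (x l)) * σ (x l) (y l)) := fun x =>
      (Finset.prod_mul_distrib).symm
    rw [Finset.sum_congr rfl fun x _ => h1 x,
      sum_prod_fn (fun l j => (starRingEnd ℂ) (b (i l) j) * σ j (y l)),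
      Finset.prod_congr rfl fun l _ => hb (i l) (y l), Finset.prod_mul_distrib,
      Finset.prod_pow_eq_pow_sum]
  conv_lhs => rw [← hψ]
  calc amp (fun _ => b) (applyLocal (fun _ => σ) ψ) i
      = ∑ x : Idx n 2, (∏ l, (starRingEnd ℂ) (b (i l) (x l)))
          * ∑ y : Idx n 2, (∏ l, σ (x l) (y l)) * ψ y := rfl
    _ = ∑ x : Idx n 2, ∑ y : Idx n 2, (∏ l, (starRingEnd ℂ) (b (i l) (x l)))
          * ((∏ l, σ (x l) (y l)) * ψ y) :=
        Finset.sum_congr rfl fun x _ => Finset.mul_sum _ _ _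
    _ = ∑ y : Idx n 2, ∑ x : Idx n 2, (∏ l, (starRingEnd ℂ) (b (i l) (x l)))
          * ((∏ l, σ (x l) (y l)) * ψ y) := Finset.sum_comm
    _ = ∑ y : Idx n 2, (∑ x : Idx n 2, (∏ l, (starRingEnd ℂ) (b (i l) (x l)))
          * (∏ l, σ (x l) (y l))) * ψ y := by
        refine Finset.sum_congr rfl fun y _ => ?_
        rw [Finset.sum_mul]
        exact Finset.sum_congr rfl fun x _ => by ring
    _ = ∑ y : Idx n 2, ((-1)^(∑ l, (i l : ℕ))
          * ∏ l, (starRingEnd ℂ) (b (i l) (y l))) * ψ y :=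
        Finset.sum_congr rfl fun y _ => by rw [inner y]
    _ = (-1)^(∑ l, (i l : ℕ)) * amp (fun _ => b) ψ i := by
        rw [amp, Finset.mul_sum]
        exact Finset.sum_congr rfl fun y _ => by ring

lemma amp_zero_of_odd (σ : Matrix (Fin 2) (Fin 2) ℂ) (b : Fin 2 → Fin 2 → ℂ)
    (hb : ∀ i y : Fin 2, (∑ x, (starRingEnd ℂ) (b i x) * σ x y)
      = (-1)^(i:ℕ) * (starRingEnd ℂ) (b i y))
    {ψ : Idx n 2 → ℂ} (hψ : applyLocal (fun _ : Fin n => σ) ψ = ψ) (i : Idx n 2)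
    (hodd : Odd (∑ l, (i l : ℕ))) :
    amp (fun _ => b) ψ i = 0 := by
  have h := amp_eigen σ b hb hψ i
  rw [Odd.neg_one_pow hodd, neg_one_mul] at h
  have h2 : (2:ℂ) * amp (fun _ => b) ψ i = 0 := by linear_combination h
  exact (mul_eq_zero.mp h2).resolve_left (by norm_num)

/-- parity completion function -/
def pfix (l : Fin n) (g : {m : Fin n // m ≠ l} → Fin 2) : Fin 2 :=
  if Even (∑ m : {m : Fin n // m ≠ l}, ((g m : ℕ))) then 0 else 1

lemma parity_insertAt (l : Fin n) (g : {m : Fin n // m ≠ l} → Fin 2) (i : Fin 2)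
    (hne : i ≠ pfix l g) :
    Odd (∑ m, ((insertAt l i g m : ℕ))) := by
  have hsplit : ∑ m, ((insertAt l i g m : ℕ))
      = (i:ℕ) + ∑ m : {m : Fin n // m ≠ l}, ((g m : ℕ)) := by
    rw [sum_split_nat l (fun m => ((insertAt l i g m : ℕ)))]
    congr 1
    · rw [insertAt_same]
    · exact Finset.sum_congr rfl fun m _ => by rw [insertAt_ne l i g m.2, Subtype.eta]
  rw [hsplit, pfix] at *
  by_cases h : Even (∑ m : {m : Fin n // m ≠ l}, ((g m : ℕ)))
  · rw [if_pos h] at hne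
    have hi : (i:ℕ) = 1 := by
      fin_cases i
      · exact absurd rfl hne
      · rfl
    rw [hi, add_comm]
    exact Even.add_one h
  · rw [if_neg h] at hne
    have hi : (i:ℕ) = 0 := by
      fin_cases i
      · rfl
      · exact absurd rfl hne
    rw [hi, zero_add]
    exact Nat.not_even_iff_odd.mp h

end Parity
section Assemble
open Finset
variable {n : ℕ}

lemma mutUnbiased_symm {d : ℕ} {B B' : Fin d → Fin d → ℂ} (h : MutUnbiased B B') :
    MutUnbiased B' B := by
  intro i j
  have h2 := h j i
  have e : (∑ x, (starRingEnd ℂ) (B' i x) * B j x)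
      = (starRingEnd ℂ) (∑ x, (starRingEnd ℂ) (B j x) * B' i x) := by
    rw [map_sum]
    exact Finset.sum_congr rfl fun x _ => by rw [map_mul, Complex.conj_conj]; ring
  rw [e, Complex.norm_conj]
  exact h2

lemma margAt_half (B : Fin n → Fin 2 → Fin 2 → ℂ) (hB : ∀ m, IsONB (B m))
    (ψ : Idx n 2 → ℂ) (hred : ∀ l, reducedAt (proj ψ) l = ((2:ℂ))⁻¹ • 1)
    (l : Fin n) (i : Fin 2) :
    margAt (jointProb (proj ψ) B) l i = 1/2 := by
  rw [margAt_jointProb hB ψ l i, hred l]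
  have e00 : (((2:ℂ))⁻¹ • (1 : Matrix (Fin 2) (Fin 2) ℂ)) 0 0 = 2⁻¹ := by
    simp [Matrix.smul_apply, Matrix.one_apply]
  have e11 : (((2:ℂ))⁻¹ • (1 : Matrix (Fin 2) (Fin 2) ℂ)) 1 1 = 2⁻¹ := by
    simp [Matrix.smul_apply, Matrix.one_apply]
  have e01 : (((2:ℂ))⁻¹ • (1 : Matrix (Fin 2) (Fin 2) ℂ)) 0 1 = 0 := by
    simp [Matrix.smul_apply, Matrix.one_apply]
  have e10 : (((2:ℂ))⁻¹ • (1 : Matrix (Fin 2) (Fin 2) ℂ)) 1 0 = 0 := by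
    simp [Matrix.smul_apply, Matrix.one_apply]
  have honb := hB l i i
  rw [if_pos rfl, Fin.sum_univ_two] at honb
  have key : (∑ a, ∑ b, (starRingEnd ℂ) (B l i a)
      * (((2:ℂ))⁻¹ • (1 : Matrix (Fin 2) (Fin 2) ℂ)) a b * B l i b) = 2⁻¹ := by
    rw [Fin.sum_univ_two, Fin.sum_univ_two, Fin.sum_univ_two, e00, e01, e10, e11]
    linear_combination (2:ℂ)⁻¹ * honb
  rw [key, show ((2:ℂ))⁻¹ = ((1/2 : ℝ) : ℂ) by norm_num, Complex.ofReal_re]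

lemma mutualInfo_one_of (σ : Matrix (Fin 2) (Fin 2) ℂ) (b : Fin 2 → Fin 2 → ℂ)
    (hb : ∀ i y : Fin 2, (∑ x, (starRingEnd ℂ) (b i x) * σ x y)
      = (-1)^(i:ℕ) * (starRingEnd ℂ) (b i y))
    (hONB : IsONB b) {ψ : Idx n 2 → ℂ}
    (hψ : applyLocal (fun _ : Fin n => σ) ψ = ψ)
    (hred : ∀ l, reducedAt (proj ψ) l = ((2:ℂ))⁻¹ • 1) (l : Fin n) :
    mutualInfo (jointProb (proj ψ) (fun _ => b)) l = 1 := by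
  apply mutualInfo_eq_one _ l
    (fun i => margAt_half _ (fun _ => hONB) ψ hred l i) (pfix l)
  intro g i hne
  rw [jointProb_eq_normSq,
    amp_zero_of_odd σ b hb hψ _ (parity_insertAt l g i hne)]
  simp

lemma CNval_eq_one {N : ℕ} (hn : 0 < n) (hN : 0 < N)
    (ρ : Matrix (Idx n 2) (Idx n 2) ℂ) (B : Fin N → Fin n → Fin 2 → Fin 2 → ℂ)
    (h : ∀ k l, mutualInfo (jointProb ρ (B k)) l = 1) :
    CNval N ρ B = 1 := by
  rw [CNval]
  have hs : (∑ k, ∑ l, mutualInfo (jointProb ρ (B k)) l) = (N : ℝ) * n := by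
    rw [Finset.sum_congr rfl fun k _ => Finset.sum_congr rfl fun l _ => h k l]
    simp [mul_comm]
  rw [hs]
  have hn' : ((n:ℝ)) ≠ 0 := Nat.cast_ne_zero.mpr hn.ne'
  have hN' : ((N:ℝ)) ≠ 0 := Nat.cast_ne_zero.mpr hN.ne'
  field_simp

lemma CNval_le_one {N : ℕ} (hn : 0 < n) (hN : 0 < N)
    {ψ : Idx n 2 → ℂ} (hunit : ∑ x, Complex.normSq (ψ x) = 1)
    (B : Fin N → Fin n → Fin 2 → Fin 2 → ℂ) (hB : ValidMUBs N B) :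
    CNval N (proj ψ) B ≤ 1 := by
  rw [CNval]
  have hMI : ∀ k l, mutualInfo (jointProb (proj ψ) (B k)) l ≤ 1 := fun k l =>
    mutualInfo_le_one _ (fun x => jointProb_nonneg _ _ _) (sum_jointProb (hB.1 k) hunit) l
  have hsum : (∑ k, ∑ l, mutualInfo (jointProb (proj ψ) (B k)) l) ≤ (N : ℝ) * n := by
    calc (∑ k, ∑ l, mutualInfo (jointProb (proj ψ) (B k)) l)
        ≤ ∑ _k : Fin N, ∑ _l : Fin n, (1:ℝ) :=
          Finset.sum_le_sum fun k _ => Finset.sum_le_sum fun l _ => hMI k l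
      _ = (N : ℝ) * n := by simp [mul_comm]
  have hpos : (0:ℝ) < (n:ℝ) * N := by
    have := mul_pos hn hN
    exact_mod_cast this
  calc (1/((n:ℝ) * N)) * ∑ k, ∑ l, mutualInfo (jointProb (proj ψ) (B k)) l
      ≤ (1/((n:ℝ) * N)) * ((N:ℝ) * n) := by
        apply mul_le_mul_of_nonneg_left hsum
        positivity
    _ = 1 := by field_simp
end Assemble

/-- A four-qubit state with completely mixed single-qubit reduced states which is
invariant under `σ_x^{⊗4}`, `σ_y^{⊗4}` and `σ_z^{⊗4}` maximizes `𝒞₃` (value `1 = log₂ 2`),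
the maximum being attained by the Pauli eigenbases, which form a complete set of three
MUBs of `ℂ²`; in particular it also maximizes `𝒞₂`. -/
theorem four_qubit_pauli_invariant_maximizes_C3
    (ψ : Idx 4 2 → ℂ) (hunit : ∑ x, Complex.normSq (ψ x) = 1)
    (hred : ∀ l, reducedAt (proj ψ) l = ((2 : ℂ))⁻¹ • 1)
    (hx : applyLocal (fun _ : Fin 4 => sigmaX) ψ = ψ)
    (hy : applyLocal (fun _ : Fin 4 => sigmaY) ψ = ψ)
    (hz : applyLocal (fun _ : Fin 4 => sigmaZ) ψ = ψ) :
    IsGreatest (CNvalues 3 (proj ψ)) 1 ∧ Real.logb 2 2 = 1 ∧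
    (∃ B : Fin 3 → Fin 2 → Fin 2 → ℂ,
      (∀ k, IsONB (B k)) ∧
      (∀ i, ∃ c : ℂ, Matrix.mulVec sigmaX (B 0 i) = c • B 0 i) ∧
      (∀ i, ∃ c : ℂ, Matrix.mulVec sigmaY (B 1 i) = c • B 1 i) ∧
      (∀ i, ∃ c : ℂ, Matrix.mulVec sigmaZ (B 2 i) = c • B 2 i) ∧
      (∀ k k', k ≠ k' → MutUnbiased (B k) (B k')) ∧
      CNval 3 (proj ψ) (fun k _ => B k) = 1) ∧
    IsGreatest (CNvalues 2 (proj ψ)) 1 := by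
  classical
  set Bfam : Fin 3 → Fin 2 → Fin 2 → ℂ := ![Bx, By, Bz] with hBfam
  have hB0 : Bfam 0 = Bx := rfl
  have hB1 : Bfam 1 = By := rfl
  have hB2 : Bfam 2 = Bz := rfl
  have hONBfam : ∀ k, IsONB (Bfam k) := by
    intro k
    fin_cases k
    · exact isONB_Bx
    · exact isONB_By
    · exact isONB_Bz
  have hMUB : ∀ k k', k ≠ k' → MutUnbiased (Bfam k) (Bfam k') := by
    intro k k' hne
    fin_cases k <;> fin_cases k' <;>
      first
        | exact absurd rfl hne
        | exact mub_xy
        | exact mub_xz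
        | exact mub_yz
        | exact mutUnbiased_symm mub_xy
        | exact mutUnbiased_symm mub_xz
        | exact mutUnbiased_symm mub_yz
  have hMI : ∀ (k : Fin 3) (l : Fin 4),
      mutualInfo (jointProb (proj ψ) (fun _ => Bfam k)) l = 1 := by
    intro k l
    fin_cases k
    · exact mutualInfo_one_of sigmaX Bx eigenrow_x isONB_Bx hx hred l
    · exact mutualInfo_one_of sigmaY By eigenrow_y isONB_By hy hred l
    · exact mutualInfo_one_of sigmaZ Bz eigenrow_z isONB_Bz hz hred l
  have hCN3 : CNval 3 (proj ψ) (fun k _ => Bfam k) = 1 :=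
    CNval_eq_one (by norm_num) (by norm_num) _ _ (fun k l => hMI k l)
  have hValid3 : ValidMUBs 3 (fun k (_ : Fin 4) => Bfam k) :=
    ⟨fun k _ => hONBfam k, fun _ k k' hne => hMUB k k' hne⟩
  have hgr3 : IsGreatest (CNvalues 3 (proj ψ)) 1 := by
    constructor
    · exact ⟨fun k _ => Bfam k, hValid3, hCN3.symm⟩
    · rintro x ⟨B, hV, rfl⟩
      exact CNval_le_one (by norm_num) (by norm_num) hunit B hV
  refine ⟨hgr3, Real.logb_self_eq_one one_lt_two, ?_, ?_⟩
  · refine ⟨Bfam, hONBfam, ?_, ?_, ?_, hMUB, hCN3⟩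
    · intro i; exact ⟨((-1)^(i:ℕ) : ℂ), by rw [hB0]; exact mulVec_x i⟩
    · intro i; exact ⟨((-1)^(i:ℕ) : ℂ), by rw [hB1]; exact mulVec_y i⟩
    · intro i; exact ⟨((-1)^(i:ℕ) : ℂ), by rw [hB2]; exact mulVec_z i⟩
  · constructor
    · refine ⟨fun k (_ : Fin 4) => Bfam (Fin.castLE (by norm_num) k),
        ⟨fun k _ => hONBfam _, fun _ k k' hne => hMUB _ _ ?_⟩, ?_⟩
      · exact fun h => hne (Fin.castLE_injective _ h)
      · refine (CNval_eq_one (by norm_num) (by norm_num) _ _ (fun k l => hMI _ l)).symm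
    · rintro x ⟨B, hV, rfl⟩
      exact CNval_le_one (by norm_num) (by norm_num) hunit B hV

end
end Paper
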